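/- Let e₀₀⁰, e₀₀¹, e₀₂⁰, e₀₂¹, e₁₁⁰, e₁₁¹, e₁₃⁰, e₁₃¹ ∈ ℂ^d and write p₀₀₀ = ‖e₀₀⁰‖², p₀₀₁ = ‖e₀₀¹‖², p₁₀₀ = ‖e₀₂⁰‖², p₁₀₁ = ‖e₀₂¹‖², p₀₁₀ = ‖e₁₁⁰‖², p₀₁₁ = ‖e₁₁¹‖², p₁₁₀ = ‖e₁₃⁰‖², p₁₁₁ = ‖e₁₃¹‖². Assume the eight values p_{ijk} sum to 2 and p₀₀₀ + p₁₁₁ > 0. Let ρ_BEC be the block-diagonal matrix indexed by (Fin 8) × (Fin d) with diagonal blocks ½|e₀₀⁰⟩⟨e₀₀⁰|, ½|e₀₀¹⟩⟨e₀₀¹|, ½|e₀₂⁰⟩⟨e₀₂⁰|, ½|e₀₂¹⟩⟨e₀₂¹|, ½|e₁₁⁰⟩⟨e₁₁⁰|, ½|e₁₁¹⟩⟨e₁₁¹|, ½|e₁₃⁰⟩⟨e₁₃⁰|, ½|e₁₃¹⟩⟨e₁₃¹|, and let ρ_EC be the block-diagonal matrix indexed by (Fin 4) × (Fin d) with diagonal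 blocks ½(|e₀₀⁰⟩⟨e₀₀⁰| + |e₁₃¹⟩⟨e₁₃¹|), ½(|e₀₂⁰⟩⟨e₀₂⁰| + |e₁₁¹⟩⟨e₁₁¹|), ½(|e₀₀¹⟩⟨e₀₀¹| + |e₁₃⁰⟩⟨e₁₃⁰|), ½(|e₀₂¹⟩⟨e₀₂¹| + |e₁₁⁰⟩⟨e₁₁⁰|). Then S(ρ_BEC) − S(ρ_EC) ≥ H(½p₀₀₀, ½p₀₀₁, ½p₁₀₀, ½p₁₀₁, ½p₀₁₀, ½p₀₁₁, ½p₁₁₀, ½p₁₁₁) − H(½(p₀₀₀+p₁₁₁), ½(p₁₀₀+p₀₁₁), ½(p₀₀₁+p₁₁₀), ½(p₁₀₁+p₀₁₀)) − ½(p₁₀₀ + p₀₁₁ + p₀₀₁ + p₁₁₀ + p₁₀₁ + p₀₁₀) − ½(p₀₀₀+p₁₁₁)·h(λ̃), where λ̃ = ½ + √( (p₀₀₀ − p₁₁₁)² + 4|⟨e₀₀⁰, e₁₃¹⟩|² ) / (2(p₀₀₀ + p₁₁₁)). -/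

import Mathlib

open scoped InnerProductSpace

/-- Shannon entropy (base 2) of a finite tuple of reals. -/
noncomputable def shannonH {n : ℕ} (p : Fin n → ℝ) : ℝ := ∑ i, -(p i * Real.logb 2 (p i))

/-- The binary entropy function `h(p) = -p log₂ p - (1-p) log₂ (1-p)`. -/
noncomputable def binH (p : ℝ) : ℝ := -(p * Real.logb 2 p) - (1 - p) * Real.logb 2 (1 - p)

-- Von Neumann entropy (base 2) of a Hermitian complex matrix, via its eigenvalues
-- counted with multiplicity (and `0` for non-Hermitian matrices).
open scoped Classical in
noncomputable def vnEntropy {k : Type*} [Fintype k] [DecidableEq k] (ρ : Matrix k k ℂ) : ℝ :=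
  if h : ρ.IsHermitian then ∑ i, -(h.eigenvalues i * Real.logb 2 (h.eigenvalues i)) else 0

/-- The block-diagonal matrix indexed by `(Fin n) × (Fin m)` whose `j`-th diagonal block
is `σ j` and whose off-diagonal blocks are zero. -/
def blockDiag' {n m : ℕ} (σ : Fin n → Matrix (Fin m) (Fin m) ℂ) :
    Matrix (Fin n × Fin m) (Fin n × Fin m) ℂ :=
  Matrix.of fun p q => if p.1 = q.1 then σ p.1 p.2 q.2 else 0

/-- The outer product `|x⟩⟨x|` of a vector `x ∈ ℂ^d`: the `d×d` matrix with `(i,j)` entry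
`x i * conj (x j)`. -/
noncomputable def outer {d : ℕ} (x : EuclideanSpace ℂ (Fin d)) : Matrix (Fin d) (Fin d) ℂ :=
  Matrix.of fun i j => x i * (starRingEnd ℂ) (x j)


noncomputable def gE' (x : ℝ) : ℝ := -(x * Real.logb 2 x)

@[simp] lemma gE'_zero : gE' 0 = 0 := by simp [gE']



lemma binH_eq (p : ℝ) : binH p = Real.binEntropy p / Real.log 2 := by
  simp [binH, Real.binEntropy, Real.logb, Real.log_inv]
  ring

lemma binH_le_one (p : ℝ) : binH p ≤ 1 := by
  rw [binH_eq]
  rw [div_le_one (by positivity : (0:ℝ) < Real.log 2)]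
  exact Real.binEntropy_le_log_two

lemma gE'_add_gE' {s l : ℝ} (hs : 0 < s) (hl0 : 0 ≤ l) (hl1 : l ≤ 1) :
    gE' (s*l) + gE' (s*(1-l)) = gE' s + s * binH l := by
  have key : ∀ u : ℝ, 0 ≤ u → gE' (s*u) = u * gE' s - s * (u * Real.logb 2 u) := by
    intro u hu
    rcases eq_or_lt_of_le hu with h | h
    · simp [← h, gE']
    · simp only [gE', Real.logb, Real.log_mul hs.ne' h.ne']
      ring
  rw [key l hl0, key (1-l) (by linarith), binH]
  ring

lemma gE'_pair_le {a b : ℝ} (ha : 0 ≤ a) (hb : 0 ≤ b) : gE' a + gE' b ≤ gE' (a+b) + (a+b) := by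
  rcases eq_or_lt_of_le (by linarith : (0:ℝ) ≤ a + b) with h | h
  · have ha' : a = 0 := by linarith
    have hb' : b = 0 := by linarith
    simp [ha', hb']
  · have h1 : a = (a+b) * (a/(a+b)) := by field_simp
    have h2 : b = (a+b) * (1 - a/(a+b)) := by field_simp; ring
    calc gE' a + gE' b = gE' ((a+b) * (a/(a+b))) + gE' ((a+b) * (1 - a/(a+b))) := by
          rw [← h1, ← h2]
      _ = gE' (a+b) + (a+b) * binH (a/(a+b)) := by
          exact gE'_add_gE' h (by positivity) (by rw [div_le_one h]; linarith)
      _ ≤ gE' (a+b) + (a+b) := by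
          have := binH_le_one (a/(a+b))
          nlinarith

open Finset in


-- two-nonzero support lemma
lemma sum_gE'_eq {n : Type*} [Fintype n] [DecidableEq n] (lam : n → ℝ) (hnn : ∀ i, 0 ≤ lam i)
    (hcard : (Finset.univ.filter (fun i => lam i ≠ 0)).card ≤ 2)
    (t D : ℝ) (h1 : ∑ i, lam i = t) (h2 : ∑ i, (lam i)^2 = t^2 - 2*D) :
    ∑ i, gE' (lam i) = gE' ((t + Real.sqrt (t^2-4*D))/2) + gE' ((t - Real.sqrt (t^2-4*D))/2) := by
  classical
  set s := Finset.univ.filter (fun i => lam i ≠ 0) with hs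
  have hg : ∑ i, gE' (lam i) = ∑ i ∈ s, gE' (lam i) := by
    rw [Finset.sum_filter_of_ne]
    intro x _ hx
    contrapose! hx
    simp [hx, gE']
  have hl : ∑ i ∈ s, lam i = t := by
    rw [← h1]; apply Finset.sum_filter_of_ne; intro x _ hx; contrapose! hx; simp [hx]
  have hl2 : ∑ i ∈ s, (lam i)^2 = t^2 - 2*D := by
    rw [← h2]; apply Finset.sum_filter_of_ne; intro x _ hx; contrapose! hx; simp [hx]
  interval_cases h : s.card
  · -- card 0
    rw [Finset.card_eq_zero] at h
    rw [h] at hg hl hl2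
    simp at hg hl hl2
    have hD : D = 0 := by nlinarith
    rw [hg, ← hl, hD]
    norm_num [gE']
  · -- card 1
    rw [Finset.card_eq_one] at h
    obtain ⟨a, ha⟩ := h
    rw [ha] at hg hl hl2
    simp at hg hl hl2
    have hD : D = 0 := by rw [hl] at hl2; linarith
    have ht : 0 ≤ t := hl ▸ hnn a
    rw [hg, hl, hD]
    rw [mul_zero, sub_zero, Real.sqrt_sq ht]
    norm_num [gE']
  · -- card 2
    rw [Finset.card_eq_two] at h
    obtain ⟨a, b, hab, hs2⟩ := h
    rw [hs2] at hg hl hl2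
    rw [Finset.sum_pair hab] at hg hl hl2
    have h3 : (lam a + lam b)^2 = t^2 := by rw [hl]
    have hab2 : (lam a - lam b)^2 = t^2 - 4*D := by linear_combination 2*hl2 - h3
    rw [hg]
    rcases le_total (lam b) (lam a) with hle | hle
    · have hh : Real.sqrt (t^2 - 4*D) = lam a - lam b := by
        rw [← hab2, Real.sqrt_sq (by linarith)]
      rw [hh, ← hl,
        show (lam a + lam b + (lam a - lam b))/2 = lam a by ring,
        show (lam a + lam b - (lam a - lam b))/2 = lam b by ring]
    · have hh : Real.sqrt (t^2 - 4*D) = lam b - lam a := by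
        rw [← hab2]
        rw [show (lam a - lam b)^2 = (lam b - lam a)^2 by ring, Real.sqrt_sq (by linarith)]
      rw [hh, ← hl,
        show (lam a + lam b + (lam b - lam a))/2 = lam b by ring,
        show (lam a + lam b - (lam b - lam a))/2 = lam a by ring]
      exact add_comm _ _

open Matrix Polynomial

open Matrix Polynomial

lemma charpoly_unitary_conj {n : Type*} [Fintype n] [DecidableEq n]
    (U : Matrix.unitaryGroup n ℂ) (D : Matrix n n ℂ) :
    ((U : Matrix n n ℂ) * D * star (U : Matrix n n ℂ)).charpoly = D.charpoly := by
  set f : Matrix n n ℂ →+* Matrix n n ℂ[X] := (C : ℂ →+* ℂ[X]).mapMatrix with hf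
  have hUU : (U : Matrix n n ℂ) * star (U : Matrix n n ℂ) = 1 :=
    Matrix.mem_unitaryGroup_iff.mp U.2
  have hPQ : f (U : Matrix n n ℂ) * f (star (U : Matrix n n ℂ)) = 1 := by
    rw [← _root_.map_mul, hUU, _root_.map_one]
  have key : charmatrix ((U : Matrix n n ℂ) * D * star (U : Matrix n n ℂ))
      = f (U : Matrix n n ℂ) * charmatrix D * f (star (U : Matrix n n ℂ)) := by
    have hc : ∀ M : Matrix n n ℂ[X], Matrix.scalar n (X : ℂ[X]) * M = M * Matrix.scalar n X :=
      fun M => (Matrix.scalar_commute _ (Commute.all _) M).eq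
    unfold charmatrix
    simp only [← hf]
    rw [Matrix.mul_sub, Matrix.sub_mul]
    congr 1
    · rw [← hc (f (U : Matrix n n ℂ)), mul_assoc, hc, hPQ, one_mul]
    · rw [← _root_.map_mul, ← _root_.map_mul]
  rw [Matrix.charpoly, Matrix.charpoly, key, Matrix.det_mul, Matrix.det_mul]
  have hdet : (f (U : Matrix n n ℂ)).det * (f (star (U : Matrix n n ℂ))).det = 1 := by
    rw [← Matrix.det_mul, hPQ, Matrix.det_one]
  rw [mul_right_comm, hdet, one_mul]

lemma charpoly_hermitian {n : Type*} [Fintype n] [DecidableEq n] {A : Matrix n n ℂ}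
    (hA : A.IsHermitian) :
    A.charpoly = (Multiset.map (fun i => X - C ((hA.eigenvalues i : ℂ))) Finset.univ.val).prod := by
  conv_lhs => rw [hA.spectral_theorem]
  rw [Unitary.conjStarAlgAut_apply]
  rw [charpoly_unitary_conj]
  have hcm : charmatrix (Matrix.diagonal (RCLike.ofReal ∘ hA.eigenvalues) : Matrix n n ℂ)
      = Matrix.diagonal (fun i => (X - C ((hA.eigenvalues i : ℂ)))) := by
    ext i j
    by_cases h : i = j
    · subst h; simp [charmatrix_apply, Matrix.diagonal_apply_eq]
    · simp [charmatrix_apply, Matrix.diagonal_apply_ne _ h, Matrix.diagonal_apply_ne, h]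
  rw [Matrix.charpoly, hcm, Matrix.det_diagonal]
  rw [Finset.prod_eq_multiset_prod]

lemma trace_hermitian {n : Type*} [Fintype n] [DecidableEq n] {A : Matrix n n ℂ}
    (hA : A.IsHermitian) : A.trace = ∑ i, (hA.eigenvalues i : ℂ) := by
  conv_lhs => rw [hA.spectral_theorem]
  rw [Unitary.conjStarAlgAut_apply]
  rw [Matrix.trace_mul_cycle,
    Matrix.mem_unitaryGroup_iff'.mp (hA.eigenvectorUnitary).2, one_mul, Matrix.trace_diagonal]
  rfl

lemma trace_sq_hermitian {n : Type*} [Fintype n] [DecidableEq n] {A : Matrix n n ℂ}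
    (hA : A.IsHermitian) : (A * A).trace = ∑ i, ((hA.eigenvalues i : ℂ))^2 := by
  conv_lhs => rw [hA.spectral_theorem]
  rw [Unitary.conjStarAlgAut_apply]
  rw [show ∀ (U D : Matrix n n ℂ), (U * D * star U) * (U * D * star U)
      = U * (D * (star U * U) * D) * star U from fun U D => by noncomm_ring]
  rw [Matrix.mem_unitaryGroup_iff'.mp (hA.eigenvectorUnitary).2, mul_one,
    Matrix.trace_mul_cycle,
    Matrix.mem_unitaryGroup_iff'.mp (hA.eigenvectorUnitary).2, one_mul,
    Matrix.diagonal_mul_diagonal, Matrix.trace_diagonal]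
  simp [pow_two]

open Polynomial in
lemma roots_hermitian {n : Type*} [Fintype n] [DecidableEq n] {A : Matrix n n ℂ}
    (hA : A.IsHermitian) :
    A.charpoly.roots = Multiset.map (fun i => ((hA.eigenvalues i : ℂ))) Finset.univ.val := by
  have hmm : (Multiset.map (fun i => X - C ((hA.eigenvalues i : ℂ))) Finset.univ.val)
      = Multiset.map (fun a => X - C a)
        (Multiset.map (fun i => ((hA.eigenvalues i : ℂ))) Finset.univ.val) := by
    rw [Multiset.map_map]; rfl
  rw [charpoly_hermitian hA, hmm, roots_multiset_prod_X_sub_C]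

open Polynomial in
lemma vnEntropy_eq_roots {n : Type*} [Fintype n] [DecidableEq n] {A : Matrix n n ℂ}
    (hA : A.IsHermitian) :
    vnEntropy A = (A.charpoly.roots.map (fun z => gE' z.re)).sum := by
  rw [vnEntropy, dif_pos hA, roots_hermitian hA, Multiset.map_map]
  rw [Finset.sum_eq_multiset_sum]
  simp [Function.comp, gE']

lemma blockDiag'_isHermitian {n m : ℕ} (σ : Fin n → Matrix (Fin m) (Fin m) ℂ)
    (hσ : ∀ j, (σ j).IsHermitian) : (blockDiag' σ).IsHermitian := by
  apply Matrix.ext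
  rintro ⟨a, b⟩ ⟨c, e⟩
  simp only [Matrix.conjTranspose_apply, _root_.blockDiag', Matrix.of_apply]
  by_cases h : a = c
  · subst h
    simp only [if_pos rfl]
    exact (hσ a).apply b e
  · simp [h, Ne.symm h]

lemma blockDiag'_eq_reindex {n m : ℕ} (σ : Fin n → Matrix (Fin m) (Fin m) ℂ) :
    blockDiag' σ = (Matrix.reindex (Equiv.prodComm (Fin m) (Fin n))
      (Equiv.prodComm (Fin m) (Fin n))) (Matrix.blockDiagonal σ) := by
  apply Matrix.ext
  rintro ⟨a, b⟩ ⟨c, e⟩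
  simp [_root_.blockDiag', Matrix.blockDiagonal_apply, eq_comm]

open Polynomial in
lemma charpoly_blockDiag' {n m : ℕ} (σ : Fin n → Matrix (Fin m) (Fin m) ℂ) :
    (blockDiag' σ).charpoly = ∏ j, (σ j).charpoly := by
  rw [blockDiag'_eq_reindex, Matrix.charpoly_reindex]
  have hcm : charmatrix (Matrix.blockDiagonal σ)
      = Matrix.blockDiagonal (fun j => charmatrix (σ j)) := by
    apply Matrix.ext
    rintro ⟨a, b⟩ ⟨c, e⟩
    by_cases h : b = e
    · subst h
      by_cases h2 : a = c
      · subst h2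
        simp [charmatrix_apply, Matrix.blockDiagonal_apply, Matrix.diagonal_apply_eq]
      · simp [charmatrix_apply, Matrix.blockDiagonal_apply, Matrix.diagonal_apply_ne,
          Prod.ext_iff, h2]
    · simp [charmatrix_apply, Matrix.blockDiagonal_apply, Matrix.diagonal_apply_ne,
        Prod.ext_iff, h, Ne.symm h]
  rw [Matrix.charpoly, hcm, Matrix.det_blockDiagonal]
  rfl

open Polynomial in
lemma vnEntropy_blockDiag' {n m : ℕ} (σ : Fin n → Matrix (Fin m) (Fin m) ℂ)
    (hσ : ∀ j, (σ j).IsHermitian) :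
    vnEntropy (blockDiag' σ) = ∑ j, vnEntropy (σ j) := by
  rw [vnEntropy_eq_roots (blockDiag'_isHermitian σ hσ), charpoly_blockDiag']
  rw [Polynomial.roots_prod _ _ (by
    apply Finset.prod_ne_zero_iff.mpr
    intro j _
    exact (Matrix.charpoly_monic _).ne_zero)]
  rw [Multiset.map_bind, Multiset.sum_bind]
  rw [Finset.sum_eq_multiset_sum]
  congr 1
  apply Multiset.map_congr rfl
  intro j _
  rw [vnEntropy_eq_roots (hσ j)]

open scoped ComplexOrder in
lemma vnEntropy_CHC {k d : ℕ} (C : Matrix (Fin k) (Fin d) ℂ) (hk : k ≤ 2)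
    (t D : ℝ) (ht : (Cᴴ * C).trace = (t : ℂ))
    (ht2 : ((Cᴴ * C) * (Cᴴ * C)).trace = ((t^2 - 2*D : ℝ) : ℂ)) :
    vnEntropy (Cᴴ * C) = gE' ((t + Real.sqrt (t^2 - 4*D))/2)
      + gE' ((t - Real.sqrt (t^2 - 4*D))/2) := by
  have hA : (Cᴴ * C).IsHermitian := Matrix.isHermitian_conjTranspose_mul_self C
  have hnn : ∀ i, 0 ≤ hA.eigenvalues i := fun i =>
    (Matrix.posSemidef_conjTranspose_mul_self C).eigenvalues_nonneg i
  have hcard : (Finset.univ.filter (fun i => hA.eigenvalues i ≠ 0)).card ≤ 2 := by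
    have h1 : (Cᴴ * C).rank = Fintype.card {i // hA.eigenvalues i ≠ 0} :=
      hA.rank_eq_card_non_zero_eigs
    rw [Fintype.card_subtype] at h1
    rw [← h1, Matrix.rank_conjTranspose_mul_self]
    exact (Matrix.rank_le_card_height C).trans (by simpa using hk)
  have hs1 : ∑ i, hA.eigenvalues i = t := by
    have h1 := trace_hermitian hA
    rw [ht] at h1
    have h2 : ((∑ i, hA.eigenvalues i : ℝ) : ℂ) = ((t : ℝ) : ℂ) := by
      push_cast [← h1]
      norm_num
    exact_mod_cast h2
  have hs2 : ∑ i, (hA.eigenvalues i)^2 = t^2 - 2*D := by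
    have h2 := trace_sq_hermitian hA
    rw [ht2] at h2
    have h3 : ((∑ i, (hA.eigenvalues i)^2 : ℝ) : ℂ) = ((t^2 - 2*D : ℝ) : ℂ) := by
      push_cast [← h2]
      norm_num
    exact_mod_cast h3
  rw [vnEntropy, dif_pos hA]
  exact sum_gE'_eq hA.eigenvalues hnn hcard t D hs1 hs2


noncomputable def rows {k d : ℕ} (v : Fin k → EuclideanSpace ℂ (Fin d)) :
    Matrix (Fin k) (Fin d) ℂ :=
  Matrix.of fun a j => (((Real.sqrt 2 : ℝ) : ℂ))⁻¹ * (starRingEnd ℂ) (v a j)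

lemma rows_CHC {k d : ℕ} (v : Fin k → EuclideanSpace ℂ (Fin d)) :
    (rows v)ᴴ * rows v = (1/2 : ℂ) • ∑ a, outer (v a) := by
  have h2 : (((Real.sqrt 2 : ℝ) : ℂ))⁻¹ * (((Real.sqrt 2 : ℝ) : ℂ))⁻¹ = 1/2 := by
    rw [← mul_inv]
    norm_cast
    rw [Real.mul_self_sqrt (by norm_num)]
    norm_num
  ext i j
  simp only [Matrix.mul_apply, Matrix.conjTranspose_apply, rows, Matrix.of_apply, outer,
    Matrix.smul_apply, Matrix.sum_apply, smul_eq_mul, Finset.mul_sum, Complex.star_def,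
    _root_.map_mul, map_inv₀, Complex.conj_ofReal, starRingEnd_self_apply]
  apply Finset.sum_congr rfl
  intro a _
  rw [← h2]
  ring

lemma trace_outer {d : ℕ} (x : EuclideanSpace ℂ (Fin d)) :
    (outer x).trace = ((‖x‖^2 : ℝ) : ℂ) := by
  rw [show ((‖x‖^2 : ℝ) : ℂ) = ⟪x, x⟫_ℂ by
    rw [inner_self_eq_norm_sq_to_K]; push_cast; norm_num]
  rw [Matrix.trace, PiLp.inner_apply]
  apply Finset.sum_congr rfl
  intro i _
  simp [Matrix.diag, outer, RCLike.inner_apply]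
  rw [Complex.mul_conj']

lemma trace_outer_mul_outer {d : ℕ} (x y : EuclideanSpace ℂ (Fin d)) :
    (outer x * outer y).trace = ⟪x, y⟫_ℂ * ⟪y, x⟫_ℂ := by
  rw [Matrix.trace]
  rw [PiLp.inner_apply, PiLp.inner_apply, Finset.sum_mul_sum]
  rw [Finset.sum_comm]
  apply Finset.sum_congr rfl
  intro i _
  simp only [Matrix.diag, Matrix.mul_apply, outer, Matrix.of_apply, RCLike.inner_apply,
    Finset.sum_mul, Finset.mul_sum]
  apply Finset.sum_congr rfl
  intro k _
  ring


lemma smul_outer_eq_CHC {d : ℕ} (x : EuclideanSpace ℂ (Fin d)) :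
    (1/2 : ℂ) • outer x = (rows ![x])ᴴ * rows ![x] := by
  rw [rows_CHC]
  congr 1
  rw [Fin.sum_univ_one]
  simp

lemma smul_outer_add_eq_CHC {d : ℕ} (x y : EuclideanSpace ℂ (Fin d)) :
    (1/2 : ℂ) • (outer x + outer y) = (rows ![x, y])ᴴ * rows ![x, y] := by
  rw [rows_CHC]
  congr 1
  rw [Fin.sum_univ_two]
  simp

lemma inner_self_cast {d : ℕ} (x : EuclideanSpace ℂ (Fin d)) :
    ⟪x, x⟫_ℂ = ((‖x‖^2 : ℝ) : ℂ) := by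
  rw [inner_self_eq_norm_sq_to_K]; push_cast; norm_num

lemma inner_mul_inner_cast {d : ℕ} (x y : EuclideanSpace ℂ (Fin d)) :
    ⟪x, y⟫_ℂ * ⟪y, x⟫_ℂ = ((‖⟪x, y⟫_ℂ‖ ^ 2 : ℝ) : ℂ) := by
  rw [← inner_conj_symm y x, Complex.mul_conj']
  norm_cast

lemma vnEntropy_B1 {d : ℕ} (x : EuclideanSpace ℂ (Fin d)) :
    vnEntropy ((1/2 : ℂ) • outer x) = gE' (‖x‖^2/2) := by
  set t : ℝ := ‖x‖^2/2 with hts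
  have htnn : 0 ≤ t := by positivity
  rw [smul_outer_eq_CHC]
  have h1 : ((rows ![x])ᴴ * rows ![x]).trace = ((t : ℝ) : ℂ) := by
    rw [← smul_outer_eq_CHC, Matrix.trace_smul, trace_outer x]
    rw [hts]
    push_cast
    rw [smul_eq_mul]
    ring
  have h2 : (((rows ![x])ᴴ * rows ![x]) * ((rows ![x])ᴴ * rows ![x])).trace
      = ((t^2 - 2*0 : ℝ) : ℂ) := by
    rw [← smul_outer_eq_CHC, smul_mul_assoc, mul_smul_comm, smul_smul,
      Matrix.trace_smul, trace_outer_mul_outer, inner_self_cast]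
    rw [hts]
    push_cast
    rw [smul_eq_mul]
    ring
  rw [vnEntropy_CHC (rows ![x]) (by norm_num) t 0 h1 h2]
  rw [show t^2 - 4*0 = t^2 by ring, Real.sqrt_sq htnn]
  rw [show (t+t)/2 = t by ring, show (t-t)/2 = 0 by ring]
  simp

lemma vnEntropy_B2 {d : ℕ} (x y : EuclideanSpace ℂ (Fin d)) :
    vnEntropy ((1/2 : ℂ) • (outer x + outer y))
      = gE' ((‖x‖^2 + ‖y‖^2)/4
          + Real.sqrt ((‖x‖^2 - ‖y‖^2)^2 + 4 * ‖⟪x, y⟫_ℂ‖ ^ 2) / 4)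
      + gE' ((‖x‖^2 + ‖y‖^2)/4
          - Real.sqrt ((‖x‖^2 - ‖y‖^2)^2 + 4 * ‖⟪x, y⟫_ℂ‖ ^ 2) / 4) := by
  set p : ℝ := ‖x‖^2 with hps
  set q : ℝ := ‖y‖^2 with hqs
  set c : ℝ := ‖⟪x, y⟫_ℂ‖ with hcs
  set t : ℝ := (p+q)/2 with hts
  set D : ℝ := (p*q - c^2)/4 with hDs
  rw [smul_outer_add_eq_CHC]
  have h1 : ((rows ![x, y])ᴴ * rows ![x, y]).trace = ((t : ℝ) : ℂ) := by
    rw [← smul_outer_add_eq_CHC, Matrix.trace_smul, Matrix.trace_add, trace_outer, trace_outer]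
    rw [hts, hps, hqs]
    push_cast
    rw [smul_eq_mul]
    ring
  have h2 : (((rows ![x, y])ᴴ * rows ![x, y]) * ((rows ![x, y])ᴴ * rows ![x, y])).trace
      = ((t^2 - 2*D : ℝ) : ℂ) := by
    rw [← smul_outer_add_eq_CHC, smul_mul_assoc, mul_smul_comm, smul_smul, Matrix.trace_smul,
      add_mul, mul_add, mul_add, Matrix.trace_add, Matrix.trace_add, Matrix.trace_add,
      trace_outer_mul_outer, trace_outer_mul_outer, trace_outer_mul_outer,
      trace_outer_mul_outer, inner_self_cast, inner_self_cast, inner_mul_inner_cast x y,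
      inner_mul_inner_cast y x]
    have hc2 : ‖⟪y, x⟫_ℂ‖ = c := by
      rw [hcs, ← inner_conj_symm y x, Complex.norm_conj]
    rw [hc2, hts, hDs, hps, hqs]
    push_cast
    rw [smul_eq_mul]
    ring
  rw [vnEntropy_CHC (rows ![x, y]) (by norm_num) t D h1 h2]
  have hsqrt : Real.sqrt (t^2 - 4*D) = Real.sqrt ((p - q)^2 + 4*c^2) / 2 := by
    rw [show t^2 - 4*D = ((p-q)^2 + 4*c^2) * (1/2)^2 by rw [hts, hDs]; ring,
      Real.sqrt_mul (by positivity), Real.sqrt_sq (by norm_num)]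
    ring
  rw [hsqrt, hts]
  rw [show ((p+q)/2 + Real.sqrt ((p-q)^2+4*c^2)/2)/2
      = (p+q)/4 + Real.sqrt ((p-q)^2+4*c^2)/4 by ring,
    show ((p+q)/2 - Real.sqrt ((p-q)^2+4*c^2)/2)/2
      = (p+q)/4 - Real.sqrt ((p-q)^2+4*c^2)/4 by ring]

set_option maxHeartbeats 2000000 in
theorem stmt15 (d : ℕ) (e000 e001 e020 e021 e110 e111 e130 e131 : EuclideanSpace ℂ (Fin d))
    (p000 p001 p100 p101 p010 p011 p110 p111 : ℝ)
    (hp000 : p000 = ‖e000‖ ^ 2) (hp001 : p001 = ‖e001‖ ^ 2)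
    (hp100 : p100 = ‖e020‖ ^ 2) (hp101 : p101 = ‖e021‖ ^ 2)
    (hp010 : p010 = ‖e110‖ ^ 2) (hp011 : p011 = ‖e111‖ ^ 2)
    (hp110 : p110 = ‖e130‖ ^ 2) (hp111 : p111 = ‖e131‖ ^ 2)
    (hsum : p000 + p001 + p100 + p101 + p010 + p011 + p110 + p111 = 2)
    (hpos : 0 < p000 + p111)
    (ρBEC : Matrix (Fin 8 × Fin d) (Fin 8 × Fin d) ℂ)
    (hρBEC : ρBEC = blockDiag'
      ![(1 / 2 : ℂ) • outer e000, (1 / 2 : ℂ) • outer e001,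
        (1 / 2 : ℂ) • outer e020, (1 / 2 : ℂ) • outer e021,
        (1 / 2 : ℂ) • outer e110, (1 / 2 : ℂ) • outer e111,
        (1 / 2 : ℂ) • outer e130, (1 / 2 : ℂ) • outer e131])
    (ρEC : Matrix (Fin 4 × Fin d) (Fin 4 × Fin d) ℂ)
    (hρEC : ρEC = blockDiag'
      ![(1 / 2 : ℂ) • (outer e000 + outer e131),
        (1 / 2 : ℂ) • (outer e020 + outer e111),
        (1 / 2 : ℂ) • (outer e001 + outer e130),
        (1 / 2 : ℂ) • (outer e021 + outer e110)])
    (lam : ℝ)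
    (hlam : lam = 1 / 2 +
      Real.sqrt ((p000 - p111) ^ 2 + 4 * ‖⟪e000, e131⟫_ℂ‖ ^ 2) /
        (2 * (p000 + p111))) :
    vnEntropy ρBEC - vnEntropy ρEC ≥
      shannonH ![p000 / 2, p001 / 2, p100 / 2, p101 / 2, p010 / 2, p011 / 2, p110 / 2, p111 / 2]
        - shannonH ![(p000 + p111) / 2, (p100 + p011) / 2, (p001 + p110) / 2, (p101 + p010) / 2]
        - 1 / 2 * (p100 + p011 + p001 + p110 + p101 + p010)
        - 1 / 2 * (p000 + p111) * binH lam := by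
  subst hρBEC hρEC hp000 hp001 hp100 hp101 hp010 hp011 hp110 hp111
  -- Hermitian-ness of the blocks
  have hB1h : ∀ x : EuclideanSpace ℂ (Fin d), ((1/2 : ℂ) • outer x).IsHermitian := fun x =>
    smul_outer_eq_CHC x ▸ Matrix.isHermitian_conjTranspose_mul_self _
  have hB2h : ∀ x y : EuclideanSpace ℂ (Fin d),
      ((1/2 : ℂ) • (outer x + outer y)).IsHermitian := fun x y =>
    smul_outer_add_eq_CHC x y ▸ Matrix.isHermitian_conjTranspose_mul_self _
  have hσ8 : ∀ j : Fin 8, ((![(1 / 2 : ℂ) • outer e000, (1 / 2 : ℂ) • outer e001,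
        (1 / 2 : ℂ) • outer e020, (1 / 2 : ℂ) • outer e021,
        (1 / 2 : ℂ) • outer e110, (1 / 2 : ℂ) • outer e111,
        (1 / 2 : ℂ) • outer e130, (1 / 2 : ℂ) • outer e131]) j).IsHermitian := by
    intro j
    fin_cases j <;> exact hB1h _
  have hσ4 : ∀ j : Fin 4, ((![(1 / 2 : ℂ) • (outer e000 + outer e131),
        (1 / 2 : ℂ) • (outer e020 + outer e111),
        (1 / 2 : ℂ) • (outer e001 + outer e130),
        (1 / 2 : ℂ) • (outer e021 + outer e110)]) j).IsHermitian := by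
    intro j
    fin_cases j <;> exact hB2h _ _
  have hBEC := vnEntropy_blockDiag' _ hσ8
  have hEC := vnEntropy_blockDiag' _ hσ4
  simp only [Fin.sum_univ_succ, Fin.sum_univ_zero, Matrix.cons_val_zero, Matrix.cons_val_succ,
    add_zero, vnEntropy_B1, vnEntropy_B2] at hBEC hEC
  rw [hBEC, hEC]
  have hH8 : shannonH ![‖e000‖^2 / 2, ‖e001‖^2 / 2, ‖e020‖^2 / 2, ‖e021‖^2 / 2, ‖e110‖^2 / 2,
      ‖e111‖^2 / 2, ‖e130‖^2 / 2, ‖e131‖^2 / 2]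
      = gE' (‖e000‖^2/2) + gE' (‖e001‖^2/2) + gE' (‖e020‖^2/2) + gE' (‖e021‖^2/2)
        + gE' (‖e110‖^2/2) + gE' (‖e111‖^2/2) + gE' (‖e130‖^2/2) + gE' (‖e131‖^2/2) := by
    simp only [shannonH, Fin.sum_univ_succ, Fin.sum_univ_zero, Matrix.cons_val_zero,
      Matrix.cons_val_succ, add_zero, gE']
    ring
  have hH4 : shannonH ![(‖e000‖^2 + ‖e131‖^2) / 2, (‖e020‖^2 + ‖e111‖^2) / 2,
      (‖e001‖^2 + ‖e130‖^2) / 2, (‖e021‖^2 + ‖e110‖^2) / 2]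
      = gE' ((‖e000‖^2 + ‖e131‖^2)/2) + gE' ((‖e020‖^2 + ‖e111‖^2)/2)
        + gE' ((‖e001‖^2 + ‖e130‖^2)/2) + gE' ((‖e021‖^2 + ‖e110‖^2)/2) := by
    simp only [shannonH, Fin.sum_univ_succ, Fin.sum_univ_zero, Matrix.cons_val_zero,
      Matrix.cons_val_succ, add_zero, gE']
    ring
  rw [hH8, hH4]
  -- generic bound for a pair block
  have key : ∀ x y : EuclideanSpace ℂ (Fin d),
      gE' ((‖x‖^2 + ‖y‖^2)/4
          + Real.sqrt ((‖x‖^2 - ‖y‖^2)^2 + 4 * ‖⟪x, y⟫_ℂ‖ ^ 2) / 4)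
      + gE' ((‖x‖^2 + ‖y‖^2)/4
          - Real.sqrt ((‖x‖^2 - ‖y‖^2)^2 + 4 * ‖⟪x, y⟫_ℂ‖ ^ 2) / 4)
      ≤ gE' ((‖x‖^2 + ‖y‖^2)/2) + (‖x‖^2 + ‖y‖^2)/2 := by
    intro x y
    have hc : ‖⟪x, y⟫_ℂ‖ ≤ ‖x‖ * ‖y‖ := by
      exact norm_inner_le_norm x y
    have hcnn : 0 ≤ ‖⟪x, y⟫_ℂ‖ := norm_nonneg _
    have hc2 : ‖⟪x, y⟫_ℂ‖ ^ 2 ≤ ‖x‖^2 * ‖y‖^2 := by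
      have h' := pow_le_pow_left₀ hcnn hc 2
      rwa [mul_pow] at h'
    have harg : (‖x‖^2 - ‖y‖^2)^2 + 4 * ‖⟪x, y⟫_ℂ‖ ^ 2 ≤ (‖x‖^2 + ‖y‖^2)^2 := by
      nlinarith [hc2]
    have hr : Real.sqrt ((‖x‖^2 - ‖y‖^2)^2 + 4 * ‖⟪x, y⟫_ℂ‖ ^ 2) ≤ ‖x‖^2 + ‖y‖^2 := by
      calc Real.sqrt ((‖x‖^2 - ‖y‖^2)^2 + 4 * ‖⟪x, y⟫_ℂ‖ ^ 2)
          ≤ Real.sqrt ((‖x‖^2 + ‖y‖^2)^2) := Real.sqrt_le_sqrt harg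
        _ = ‖x‖^2 + ‖y‖^2 := Real.sqrt_sq (by positivity)
    have hrnn : 0 ≤ Real.sqrt ((‖x‖^2 - ‖y‖^2)^2 + 4 * ‖⟪x, y⟫_ℂ‖ ^ 2) :=
      Real.sqrt_nonneg _
    have h := gE'_pair_le
      (a := (‖x‖^2 + ‖y‖^2)/4
          + Real.sqrt ((‖x‖^2 - ‖y‖^2)^2 + 4 * ‖⟪x, y⟫_ℂ‖ ^ 2) / 4)
      (b := (‖x‖^2 + ‖y‖^2)/4
          - Real.sqrt ((‖x‖^2 - ‖y‖^2)^2 + 4 * ‖⟪x, y⟫_ℂ‖ ^ 2) / 4)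
      (by positivity) (by nlinarith)
    rw [show ((‖x‖^2 + ‖y‖^2)/4
          + Real.sqrt ((‖x‖^2 - ‖y‖^2)^2 + 4 * ‖⟪x, y⟫_ℂ‖ ^ 2) / 4)
        + ((‖x‖^2 + ‖y‖^2)/4
          - Real.sqrt ((‖x‖^2 - ‖y‖^2)^2 + 4 * ‖⟪x, y⟫_ℂ‖ ^ 2) / 4)
        = (‖x‖^2 + ‖y‖^2)/2 from by ring] at h
    exact h
  have h1 := key e020 e111
  have h2 := key e001 e130
  have h3 := key e021 e110
  -- exact treatment of block 0
  have hc0 : ‖⟪e000, e131⟫_ℂ‖ ≤ ‖e000‖ * ‖e131‖ := by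
    exact norm_inner_le_norm e000 e131
  have hc0nn : 0 ≤ ‖⟪e000, e131⟫_ℂ‖ := norm_nonneg _
  have hr0nn : 0 ≤ Real.sqrt ((‖e000‖^2 - ‖e131‖^2)^2 + 4 * ‖⟪e000, e131⟫_ℂ‖ ^ 2) :=
    Real.sqrt_nonneg _
  have hr0 : Real.sqrt ((‖e000‖^2 - ‖e131‖^2)^2 + 4 * ‖⟪e000, e131⟫_ℂ‖ ^ 2)
      ≤ ‖e000‖^2 + ‖e131‖^2 := by
    calc Real.sqrt ((‖e000‖^2 - ‖e131‖^2)^2 + 4 * ‖⟪e000, e131⟫_ℂ‖ ^ 2)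
        ≤ Real.sqrt ((‖e000‖^2 + ‖e131‖^2)^2) := Real.sqrt_le_sqrt (by
          have hc2 : ‖⟪e000, e131⟫_ℂ‖ ^ 2 ≤ ‖e000‖^2 * ‖e131‖^2 := by
            have h' := pow_le_pow_left₀ hc0nn hc0 2
            rwa [mul_pow] at h'
          nlinarith [hc2])
      _ = ‖e000‖^2 + ‖e131‖^2 := Real.sqrt_sq (by positivity)
  have hlam0 : 0 ≤ lam := by
    rw [hlam]
    have : 0 ≤ Real.sqrt ((‖e000‖^2 - ‖e131‖^2)^2 + 4 * ‖⟪e000, e131⟫_ℂ‖ ^ 2)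
        / (2 * (‖e000‖^2 + ‖e131‖^2)) := by positivity
    linarith
  have hlam1 : lam ≤ 1 := by
    rw [hlam]
    have hd : Real.sqrt ((‖e000‖^2 - ‖e131‖^2)^2 + 4 * ‖⟪e000, e131⟫_ℂ‖ ^ 2)
        / (2 * (‖e000‖^2 + ‖e131‖^2)) ≤ 1/2 := by
      rw [div_le_iff₀ (by linarith)]
      linarith
    linarith
  have hS : 0 < (‖e000‖^2 + ‖e131‖^2)/2 := by linarith
  have ha0 : (‖e000‖^2 + ‖e131‖^2)/4
        + Real.sqrt ((‖e000‖^2 - ‖e131‖^2)^2 + 4 * ‖⟪e000, e131⟫_ℂ‖ ^ 2) / 4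
      = ((‖e000‖^2 + ‖e131‖^2)/2) * lam := by
    rw [hlam]
    field_simp
    ring
  have hb0 : (‖e000‖^2 + ‖e131‖^2)/4
        - Real.sqrt ((‖e000‖^2 - ‖e131‖^2)^2 + 4 * ‖⟪e000, e131⟫_ℂ‖ ^ 2) / 4
      = ((‖e000‖^2 + ‖e131‖^2)/2) * (1 - lam) := by
    rw [hlam]
    field_simp
    ring
  have heq0 : gE' ((‖e000‖^2 + ‖e131‖^2)/4
        + Real.sqrt ((‖e000‖^2 - ‖e131‖^2)^2 + 4 * ‖⟪e000, e131⟫_ℂ‖ ^ 2) / 4)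
      + gE' ((‖e000‖^2 + ‖e131‖^2)/4
        - Real.sqrt ((‖e000‖^2 - ‖e131‖^2)^2 + 4 * ‖⟪e000, e131⟫_ℂ‖ ^ 2) / 4)
      = gE' ((‖e000‖^2 + ‖e131‖^2)/2) + ((‖e000‖^2 + ‖e131‖^2)/2) * binH lam := by
    rw [ha0, hb0, gE'_add_gE' hS hlam0 hlam1]
  linarith [h1, h2, h3, heq0]
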